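/- For an L-smooth function φ and an inexact gradient step x' := x − βd with direction d ∈ E and stepsize β > 0, one has φ(x') − φ(x) ≤ −(β/2 − β²L)‖∇φ(x)‖² + (β/2 + β²L)‖∇φ(x) − d‖². -/

import Mathlib

open RealInnerProductSpace

theorem descent_lemma
    {E : Type*} [NormedAddCommGroup E] [InnerProductSpace ℝ E] [CompleteSpace E]
    (L : ℝ) (hL : 0 < L)
    (φ : E → ℝ) (hdiff : Differentiable ℝ φ)
    (hLip : ∀ a b : E, ‖gradient φ a - gradient φ b‖ ≤ L * ‖a - b‖)
    (x h : E) :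
    φ (x + h) ≤ φ x + ⟪gradient φ x, h⟫ + L / 2 * ‖h‖ ^ 2 := by
  set g : ℝ → ℝ := fun t => φ (x + t • h) - t * ⟪gradient φ x, h⟫ - L / 2 * t ^ 2 * ‖h‖ ^ 2
    with hg
  have hderiv : ∀ t : ℝ, HasDerivAt g
      (⟪gradient φ (x + t • h), h⟫ - ⟪gradient φ x, h⟫ - L * t * ‖h‖ ^ 2) t := by
    intro t
    have hc : HasDerivAt (fun t : ℝ => x + t • h) h t := by
      simpa using ((hasDerivAt_id t).smul_const h).const_add x
    have hφ : HasDerivAt (fun t : ℝ => φ (x + t • h)) ⟪gradient φ (x + t • h), h⟫ t := by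
      have := ((hdiff (x + t • h)).hasGradientAt.hasFDerivAt).comp_hasDerivAt t hc
      exact this
    have h2 : HasDerivAt (fun t : ℝ => t * ⟪gradient φ x, h⟫) ⟪gradient φ x, h⟫ t := by
      simpa using (hasDerivAt_id t).mul_const (⟪gradient φ x, h⟫)
    have h3 : HasDerivAt (fun t : ℝ => L / 2 * t ^ 2 * ‖h‖ ^ 2) (L * t * ‖h‖ ^ 2) t := by
      have := ((hasDerivAt_pow 2 t).const_mul (L / 2)).mul_const (‖h‖ ^ 2)
      refine this.congr_deriv ?_
      ring
    exact (hφ.sub h2).sub h3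
  have hmono : AntitoneOn g (Set.Icc 0 1) := by
    apply antitoneOn_of_deriv_nonpos (convex_Icc 0 1)
    · exact (Differentiable.continuous fun t => (hderiv t).differentiableAt).continuousOn
    · intro t _; exact (hderiv t).differentiableAt.differentiableWithinAt
    · intro t ht
      rw [(hderiv t).deriv]
      rw [interior_Icc] at ht
      have hip : ⟪gradient φ (x + t • h) - gradient φ x, h⟫ ≤ L * t * ‖h‖ ^ 2 := by
        calc ⟪gradient φ (x + t • h) - gradient φ x, h⟫
            ≤ ‖gradient φ (x + t • h) - gradient φ x‖ * ‖h‖ :=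
              real_inner_le_norm _ _
          _ ≤ (L * ‖(x + t • h) - x‖) * ‖h‖ := by
              gcongr; exact hLip _ _
          _ = L * (|t| * ‖h‖) * ‖h‖ := by
              rw [add_sub_cancel_left, norm_smul]; norm_num
          _ = L * t * ‖h‖ ^ 2 := by
              rw [abs_of_pos ht.1]; ring
      rw [inner_sub_left] at hip
      linarith
  have := hmono (Set.left_mem_Icc.mpr zero_le_one) (Set.right_mem_Icc.mpr zero_le_one)
    zero_le_one
  simp only [hg, zero_smul, add_zero, one_smul, zero_mul, zero_pow, mul_zero, sub_zero,
    one_mul, one_pow, mul_one] at this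
  linarith

/-- for an `L`-smooth function `φ` and an inexact gradient step
`x' = x - β d`, one has
`φ(x') - φ(x) ≤ -(β/2 - β²L)‖∇φ(x)‖² + (β/2 + β²L)‖∇φ(x) - d‖²`. -/
theorem inexact_gradient_step_descent
    {E : Type*} [NormedAddCommGroup E] [InnerProductSpace ℝ E] [FiniteDimensional ℝ E]
    (L β : ℝ) (hL : 0 < L) (hβ : 0 < β)
    (φ : E → ℝ) (hdiff : Differentiable ℝ φ)
    (hLip : ∀ a b : E, ‖gradient φ a - gradient φ b‖ ≤ L * ‖a - b‖)
    (x d : E) :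
    φ (x - β • d) - φ x ≤
      -(β / 2 - β ^ 2 * L) * ‖gradient φ x‖ ^ 2
        + (β / 2 + β ^ 2 * L) * ‖gradient φ x - d‖ ^ 2 := by
  have key := descent_lemma (E := E) L hL φ hdiff hLip x (-(β • d))
  rw [← sub_eq_add_neg] at key
  set g := gradient φ x with hgdef
  set e := g - d with hedef
  have hd : d = g - e := by rw [hedef]; abel
  have hib : ⟪g, -(β • d)⟫ = -β * ⟪g, g⟫ + β * ⟪g, e⟫ := by
    rw [hd, inner_neg_right, inner_smul_right, inner_sub_right]; ring
  have hnb : ‖-(β • d)‖ ^ 2 = β ^ 2 * ‖g - e‖ ^ 2 := by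
    rw [hd, norm_neg, norm_smul, mul_pow, Real.norm_eq_abs, sq_abs]
  have h1 : ⟪g, e⟫ ≤ (‖g‖ ^ 2 + ‖e‖ ^ 2) / 2 := by
    have := real_inner_le_norm g e
    nlinarith [sq_nonneg (‖g‖ - ‖e‖)]
  have h2 : ‖g - e‖ ^ 2 ≤ 2 * ‖g‖ ^ 2 + 2 * ‖e‖ ^ 2 := by
    have h := norm_sub_le g e
    nlinarith [mul_self_le_mul_self (norm_nonneg (g - e)) h, sq_nonneg (‖g‖ - ‖e‖)]
  have hgg : ⟪g, g⟫ = ‖g‖ ^ 2 := real_inner_self_eq_norm_sq g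
  rw [hib, hnb, hgg] at key
  nlinarith [key, mul_le_mul_of_nonneg_left h2 (by positivity : (0:ℝ) ≤ L / 2 * β ^ 2),
    mul_le_mul_of_nonneg_left h1 (le_of_lt hβ)]
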